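/- Equality case of the generalized Newton–MacLaurin inequality: Let λ ∈ Γ_k and let integers satisfy n ≥ k > l ≥ 0, n ≥ r > s ≥ 0, k ≥ r, l ≥ s, with (k,l) ≠ (r,s). Then equality ((σ_k(λ)/C_n^k)/(σ_l(λ)/C_n^l))^{1/(k−l)} = ((σ_r(λ)/C_n^r)/(σ_s(λ)/C_n^s))^{1/(r−s)} holds if and only if λ_1 = λ_2 = ⋯ = λ_n. -/

import Mathlib

open Finset Polynomial

/-- The `m`-th elementary symmetric function of `x ∈ ℝⁿ`. -/
noncomputable def esym (n m : ℕ) (x : Fin n → ℝ) : ℝ :=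
  ∑ s ∈ Finset.univ.powersetCard m, ∏ i ∈ s, x i

/-- The Gårding cone `Γ_k ⊂ ℝⁿ`. -/
def GardingCone (n k : ℕ) : Set (Fin n → ℝ) :=
  {x | ∀ i : ℕ, 1 ≤ i → i ≤ k → 0 < esym n i x}

lemma esym_zero (n : ℕ) (x : Fin n → ℝ) : esym n 0 x = 1 := by
  simp [esym]

lemma esym_one (n : ℕ) (x : Fin n → ℝ) : esym n 1 x = ∑ i, x i := by
  simp [esym, Finset.powersetCard_one, Finset.sum_map]

lemma sq_sum_aux {ι : Type*} [DecidableEq ι] (s : Finset ι) (x : ι → ℝ) :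
    (∑ i ∈ s, x i)^2 = ∑ i ∈ s, (x i)^2 + 2 * ∑ t ∈ s.powersetCard 2, ∏ i ∈ t, x i := by
  induction s using Finset.induction_on with
  | empty =>
    rw [Finset.powersetCard_eq_empty.2 (by simp)]
    simp
  | @insert a s ha ih =>
    rw [Finset.sum_insert ha, Finset.sum_insert ha]
    have h2 : (insert a s).powersetCard 2 = s.powersetCard 2 ∪ (s.powersetCard 1).image (insert a) :=
      Finset.powersetCard_succ_insert ha 1
    have hdisj : Disjoint (s.powersetCard 2) ((s.powersetCard 1).image (insert a)) := by
      rw [Finset.disjoint_left]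
      rintro t ht hti
      rw [Finset.mem_powersetCard] at ht
      obtain ⟨u, hu, rfl⟩ := Finset.mem_image.1 hti
      exact ha (ht.1 (Finset.mem_insert_self a u))
    have hinj : ∀ t1 ∈ s.powersetCard 1, ∀ t2 ∈ s.powersetCard 1, insert a t1 = insert a t2 → t1 = t2 := by
      intro t1 h1 t2 h2' he
      rw [Finset.mem_powersetCard] at h1 h2'
      have n1 : a ∉ t1 := fun h => ha (h1.1 h)
      have n2 : a ∉ t2 := fun h => ha (h2'.1 h)
      rw [← Finset.erase_insert n1, he, Finset.erase_insert n2]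
    rw [h2, Finset.sum_union hdisj, Finset.sum_image hinj]
    have hs1 : ∑ t ∈ s.powersetCard 1, ∏ i ∈ insert a t, x i = x a * ∑ i ∈ s, x i := by
      rw [Finset.powersetCard_one, Finset.sum_map, Finset.mul_sum]
      refine Finset.sum_congr rfl fun i hi => ?_
      have hai : a ∉ ({i} : Finset ι) := by
        simp only [Finset.mem_singleton]
        rintro rfl; exact ha hi
      simp [Finset.prod_insert hai]
    rw [hs1]
    linear_combination ih

lemma esym_coeff (n m : ℕ) (h : m ≤ n) (x : Fin n → ℝ) :
    (∏ i, (X + C (x i))).coeff (n - m) = esym n m x := by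
  rw [Finset.prod_X_add_C_coeff _ x (by simpa using Nat.sub_le n m)]
  simp only [Finset.card_univ, Fintype.card_fin, Nat.sub_sub_self h]
  rfl

lemma esym_compl (n m : ℕ) (h : m ≤ n) (x : Fin n → ℝ) :
    esym n (n - m) x = ∑ t ∈ (Finset.univ : Finset (Fin n)).powersetCard m, ∏ i ∈ tᶜ, x i := by
  unfold esym
  refine Finset.sum_nbij' (fun t => tᶜ) (fun t => tᶜ) ?_ ?_ ?_ ?_ ?_
  · intro t ht
    rw [Finset.mem_powersetCard_univ] at ht ⊢
    rw [Finset.card_compl, ht, Fintype.card_fin]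
    omega
  · intro t ht
    rw [Finset.mem_powersetCard_univ] at ht ⊢
    rw [Finset.card_compl, ht, Fintype.card_fin]
  · intro t _; exact compl_compl t
  · intro t _; exact compl_compl t
  · intro t _; rw [compl_compl]

lemma sum_sq_sub (n : ℕ) (x : Fin n → ℝ) :
    ∑ i, ∑ j, (x i - x j)^2 = 2*n*(∑ i, (x i)^2) - 2*(∑ i, x i)^2 := by
  have key : ∀ i j, (x i - x j)^2 = (x i)^2 + (x j)^2 - 2*(x i * x j) := fun i j => by ring
  simp_rw [key, Finset.sum_sub_distrib, Finset.sum_add_distrib, Finset.sum_const,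
    Finset.card_fin, nsmul_eq_mul, ← Finset.mul_sum, ← Finset.sum_mul, Finset.mul_sum]
  simp_rw [← Finset.mul_sum]
  ring

lemma cs_ineq (n : ℕ) (x : Fin n → ℝ) : (∑ i, x i)^2 ≤ n * ∑ i, (x i)^2 := by
  have h0 : 0 ≤ ∑ i, ∑ j, (x i - x j)^2 :=
    Finset.sum_nonneg fun i _ => Finset.sum_nonneg fun j _ => sq_nonneg _
  rw [sum_sq_sub] at h0
  linarith

lemma cs_eq (n : ℕ) (x : Fin n → ℝ) (h : (∑ i, x i)^2 = n * ∑ i, (x i)^2) :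
    ∀ i j, x i = x j := by
  have h0 : ∑ i, ∑ j, (x i - x j)^2 = 0 := by rw [sum_sq_sub]; linarith
  intro i j
  have h1 := (Finset.sum_eq_zero_iff_of_nonneg
    (fun i _ => Finset.sum_nonneg fun j _ => sq_nonneg (x i - x j))).1 h0 i (Finset.mem_univ i)
  have h2 := (Finset.sum_eq_zero_iff_of_nonneg
    (fun j _ => sq_nonneg (x i - x j))).1 h1 j (Finset.mem_univ j)
  nlinarith [h2]

lemma deriv_step (N : ℕ) (x : Fin (N+1) → ℝ) :
    ∃ μ : Fin N → ℝ, ∀ j ≤ N, ((N:ℝ)+1) * esym N j μ = (((N:ℝ)+1) - j) * esym (N+1) j x := by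
  set p : ℝ[X] := ∏ i, (X + C (x i)) with hp
  have hmon : ∀ i ∈ (Finset.univ : Finset (Fin (N+1))), (X + C (x i)).Monic :=
    fun i _ => monic_X_add_C _
  have hmonic : p.Monic := monic_prod_of_monic _ _ hmon
  have hdeg : p.natDegree = N + 1 := by
    rw [hp, natDegree_prod_of_monic _ _ hmon]
    simp [natDegree_X_add_C]
  have hproots : p.roots = (Finset.univ.val.map (fun i => -(x i))) := by
    have hrw : p = ((Finset.univ.val.map (fun i => -(x i))).map (fun a => X - C a)).prod := by
      rw [hp, Finset.prod, Multiset.map_map]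
      congr 1
      apply Multiset.map_congr rfl
      intro i _
      simp [sub_neg_eq_add]
    rw [hrw, Polynomial.roots_multiset_prod_X_sub_C]
  have hcardroots : Multiset.card p.roots = N + 1 := by rw [hproots]; simp
  set q := derivative p with hq
  have hqdegle : q.natDegree ≤ N := by
    have h := Polynomial.natDegree_derivative_le p
    rw [← hq] at h
    omega
  have hqcoeff : q.coeff N = (N:ℝ)+1 := by
    rw [hq, Polynomial.coeff_derivative]
    have : p.coeff (N+1) = 1 := by
      have := hmonic.coeff_natDegree
      rwa [hdeg] at this
    rw [this]; push_cast; ring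
  have hqne : q ≠ 0 := fun h => by simp [h] at hqcoeff; linarith [Nat.cast_nonneg (α := ℝ) N]
  have hqdeg : q.natDegree = N :=
    le_antisymm hqdegle (le_natDegree_of_ne_zero (by rw [hqcoeff]; positivity))
  have hqcard : Multiset.card q.roots = N := by
    have h1 := Polynomial.card_roots_le_derivative p
    rw [← hq] at h1
    have h2 := Polynomial.card_roots' q
    rw [hqdeg] at h2
    omega
  have hsplits : Splits q := (Polynomial.splits_iff_card_roots).2 (by omega)
  have hfact : q = C ((N:ℝ)+1) * (q.roots.map fun a => X - C a).prod := by
    have := hsplits.eq_prod_roots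
    rwa [Polynomial.leadingCoeff, hqdeg, hqcoeff] at this
  set L := q.roots.toList with hLdef
  have hL : L.length = N := by rw [hLdef, Multiset.length_toList, hqcard]
  set μ : Fin N → ℝ := fun i => -(L.get (Fin.cast hL.symm i)) with hμ
  have hprodμ : ∏ i : Fin N, (X + C (μ i)) = (q.roots.map fun a => X - C a).prod := by
    have e1 : ∏ i : Fin N, (X + C (μ i)) = ∏ i : Fin L.length, (X - C (L.get i)) := by
      refine Fintype.prod_equiv (finCongr hL.symm) _ _ fun i => ?_
      simp [hμ, sub_eq_add_neg, finCongr]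
    rw [e1]
    have hms : (Multiset.map (fun a => X - C a) q.roots).prod
        = (L.map (fun a => X - C a)).prod := by
      conv_lhs => rw [← Multiset.coe_toList q.roots]
      rw [Multiset.map_coe, Multiset.prod_coe, hLdef]
    rw [hms, ← List.ofFn_getElem_eq_map L (fun a => X - C a), List.prod_ofFn]
    exact Fintype.prod_congr _ _ fun i => by simp [List.get_eq_getElem]
  have hqfact : q = C ((N:ℝ)+1) * ∏ i : Fin N, (X + C (μ i)) := by rw [hprodμ, ← hfact]
  refine ⟨μ, fun j hj => ?_⟩
  have c1 : q.coeff (N - j) = ((N:ℝ)+1) * esym N j μ := by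
    rw [hqfact, Polynomial.coeff_C_mul, esym_coeff N j hj]
  have c2 : q.coeff (N - j) = esym (N+1) j x * (((N+1) - j : ℕ) : ℝ) := by
    rw [hq, Polynomial.coeff_derivative]
    have h3 : N - j + 1 = (N + 1) - j := by omega
    rw [h3, esym_coeff (N+1) j (by omega)]
    push_cast [Nat.cast_sub hj, Nat.cast_sub (show j ≤ N + 1 by omega)]
    ring
  rw [← c1, c2]
  have h4 : (((N+1) - j : ℕ) : ℝ) = (N : ℝ) + 1 - j := by
    push_cast [Nat.cast_sub (by omega : j ≤ N + 1)]; ring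
  rw [h4]; ring

lemma esym_sq_sub (n : ℕ) (x : Fin n → ℝ) :
    esym n 2 x = ((∑ i, x i)^2 - ∑ i, (x i)^2)/2 := by
  have h := sq_sum_aux (Finset.univ : Finset (Fin n)) x
  unfold esym
  linarith

lemma var_iff (n : ℕ) (hn : 2 ≤ n) (x : Fin n → ℝ) :
    (∑ i, x i)^2 = n * ∑ i, (x i)^2 ↔
    (esym n 1 x / (n.choose 1 : ℝ))^2 = esym n 2 x / (n.choose 2 : ℝ) := by
  have hn0 : (0:ℝ) < n := by exact_mod_cast (by omega : 0 < n)
  have hn1 : (0:ℝ) < (n:ℝ) - 1 := by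
    have : (2:ℝ) ≤ n := by exact_mod_cast hn
    linarith
  constructor
  · intro h
    rw [esym_one, Nat.choose_one_right, esym_sq_sub, Nat.cast_choose_two, div_pow,
      div_eq_div_iff (by positivity) (by positivity)]
    linear_combination (-(n:ℝ)/2) * h
  · intro h
    rw [esym_one, Nat.choose_one_right, esym_sq_sub, Nat.cast_choose_two, div_pow,
      div_eq_div_iff (by positivity) (by positivity)] at h
    have hc : (n:ℝ) * ((∑ i, x i)^2) = (n:ℝ) * ((n:ℝ) * ∑ i, (x i)^2) := by
      linear_combination (-2 : ℝ) * h
    exact mul_left_cancel₀ (ne_of_gt hn0) hc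

lemma newton (m : ℕ) (hm : 1 ≤ m) : ∀ N, m + 1 ≤ N → ∀ x : Fin N → ℝ,
    esym N (m-1) x / (N.choose (m-1) : ℝ) * (esym N (m+1) x / (N.choose (m+1) : ℝ))
      ≤ (esym N m x / (N.choose m : ℝ))^2 ∧
    (esym N m x ≠ 0 →
      esym N (m-1) x / (N.choose (m-1) : ℝ) * (esym N (m+1) x / (N.choose (m+1) : ℝ))
        = (esym N m x / (N.choose m : ℝ))^2 →
      (∑ i, x i)^2 = N * ∑ i, (x i)^2) := by
  intro N hN
  induction N, hN using Nat.le_induction with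
  | base =>
    intro x
    have hm' : (0:ℝ) < m := by exact_mod_cast hm
    set a : Fin (m+1) → ℝ := fun i => ∏ j ∈ ({i} : Finset (Fin (m+1)))ᶜ, x j with ha
    have hxa : ∀ i0, (∏ l, x l) = x i0 * a i0 := by
      intro i0
      rw [ha]
      simp only [Finset.compl_singleton]
      exact (Finset.mul_prod_erase _ _ (Finset.mem_univ i0)).symm
    have F1 : esym (m+1) m x = ∑ i, a i := by
      have h := esym_compl (m+1) 1 (by omega) x
      rw [show m + 1 - 1 = m from rfl] at h
      rw [h, Finset.powersetCard_one, Finset.sum_map]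
      rfl
    have F2 : esym (m+1) (m+1) x = ∏ i, x i := by
      have h := esym_compl (m+1) 0 (by omega) x
      rw [Nat.sub_zero] at h
      rw [h, Finset.powersetCard_zero, Finset.sum_singleton, Finset.compl_empty]
    have key2 : ∀ t ∈ (Finset.univ : Finset (Fin (m+1))).powersetCard 2,
        (∏ i ∈ tᶜ, x i) * ∏ i, x i = ∏ i ∈ t, a i := by
      intro t ht
      rw [Finset.mem_powersetCard_univ] at ht
      obtain ⟨i, j, hij, rfl⟩ := Finset.card_eq_two.1 ht
      have hji : ({i, j} : Finset (Fin (m+1)))ᶜ = (({i} : Finset (Fin (m+1)))ᶜ).erase j := by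
        rw [Finset.pair_comm, show ({j, i} : Finset (Fin (m+1))) = insert j {i} from rfl,
          Finset.compl_insert]
      have hij' : ({i, j} : Finset (Fin (m+1)))ᶜ = (({j} : Finset (Fin (m+1)))ᶜ).erase i := by
        rw [show ({i, j} : Finset (Fin (m+1))) = insert i {j} from rfl, Finset.compl_insert]
      have hai : a i = x j * ∏ l ∈ ({i, j} : Finset (Fin (m+1)))ᶜ, x l := by
        rw [hji]
        exact (Finset.mul_prod_erase _ _ (by simp [Finset.mem_compl, hij.symm])).symm
      have haj : a j = x i * ∏ l ∈ ({i, j} : Finset (Fin (m+1)))ᶜ, x l := by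
        rw [hij']
        exact (Finset.mul_prod_erase _ _ (by simp [Finset.mem_compl, hij])).symm
      rw [Finset.prod_pair hij, hai, haj, hxa i, hai]
      ring
    have F3 : esym (m+1) (m-1) x * esym (m+1) (m+1) x = esym (m+1) 2 a := by
      have h := esym_compl (m+1) 2 (by omega) x
      rw [show m + 1 - 2 = m - 1 by omega] at h
      rw [h, F2, Finset.sum_mul]
      unfold esym
      exact Finset.sum_congr rfl key2
    have E2a : esym (m+1) 2 a = ((∑ i, a i)^2 - ∑ i, (a i)^2)/2 := esym_sq_sub (m+1) a
    have hc1 : (((m+1)).choose (m+1) : ℝ) = 1 := by simp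
    have hcm : (((m+1)).choose m : ℝ) = (m:ℝ) + 1 := by
      rw [Nat.choose_succ_self_right]; push_cast; ring
    have hcm1 : (((m+1)).choose (m-1) : ℝ) = ((m:ℝ)+1)*(m:ℝ)/2 := by
      have h2 : (m+1).choose (m-1) = (m+1).choose 2 := by
        rw [← Nat.choose_symm (by omega : 2 ≤ m+1), show m+1-2 = m-1 by omega]
      rw [h2, Nat.cast_choose_two]
      push_cast; ring
    have hCS : (∑ i, a i)^2 ≤ ((m:ℝ)+1) * ∑ i, (a i)^2 := by
      have := cs_ineq (m+1) a
      push_cast at this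
      exact this
    have hd1 : (0:ℝ) < ((m:ℝ)+1)*(m:ℝ)/2 := by nlinarith
    constructor
    · rw [hc1, div_one, div_mul_eq_mul_div, F3, E2a, F1, hcm1, hcm, div_pow,
        div_div_eq_mul_div, div_le_div_iff₀ (by nlinarith) (by positivity)]
      nlinarith [mul_le_mul_of_nonneg_left hCS (by positivity : (0:ℝ) ≤ (m:ℝ)+1)]
    · intro hne heq
      rw [hc1, div_one, div_mul_eq_mul_div, F3, E2a, F1, hcm1, hcm, div_pow,
        div_div_eq_mul_div, div_eq_div_iff (by nlinarith) (by positivity)] at heq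
      have hS' : ((m:ℝ)+1) * (∑ i, a i)^2 = ((m:ℝ)+1) * (((m:ℝ)+1) * ∑ i, (a i)^2) := by
        linear_combination heq
      have hS := mul_left_cancel₀ (by positivity : ((m:ℝ)+1) ≠ 0) hS'
      have hconst : ∀ i j, a i = a j := by
        apply cs_eq (m+1) a
        push_cast
        exact hS
      rw [F1] at hne
      have hai0 : ∀ i, a i ≠ 0 := by
        intro i hi0
        apply hne
        calc ∑ j, a j = ∑ j : Fin (m+1), (0:ℝ) := by
              exact Finset.sum_congr rfl fun j _ => by rw [hconst j i, hi0]
          _ = 0 := by simp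
      have hxconst : ∀ i j, x i = x j := by
        intro i j
        have hpr : x i * a i = x j * a j := by rw [← hxa i, ← hxa j]
        rw [hconst i j] at hpr
        exact mul_right_cancel₀ (hai0 j) hpr
      set i0 : Fin (m+1) := ⟨0, by omega⟩
      have h1 : ∑ i, x i = ((m:ℝ)+1) * x i0 := by
        rw [Finset.sum_congr rfl fun i _ => hxconst i i0, Finset.sum_const,
          Finset.card_univ, Fintype.card_fin, nsmul_eq_mul]
        push_cast; ring
      have h2 : ∑ i, (x i)^2 = ((m:ℝ)+1) * (x i0)^2 := by
        rw [Finset.sum_congr rfl fun i _ => by rw [hxconst i i0], Finset.sum_const,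
          Finset.card_univ, Fintype.card_fin, nsmul_eq_mul]
        push_cast; ring
      rw [h1, h2]
      push_cast; ring
  | succ N hN ih =>
    intro x
    obtain ⟨μ, hkey⟩ := deriv_step N x
    have pmEq : ∀ j, j ≤ N → esym (N+1) j x / ((N+1).choose j : ℝ)
        = esym N j μ / (N.choose j : ℝ) := by
      intro j hj
      have hk := hkey j hj
      have hchoose := Nat.choose_mul_succ_eq N j
      have hcj : (N.choose j : ℝ) * ((N:ℝ)+1) = ((N+1).choose j : ℝ) * (((N:ℝ)+1) - j) := by
        have h2 : ((N.choose j * (N+1) : ℕ) : ℝ) = (((N+1).choose j * (N+1-j) : ℕ) : ℝ) := by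
          exact_mod_cast congrArg (Nat.cast : ℕ → ℝ) hchoose
        push_cast [Nat.cast_sub (by omega : j ≤ N + 1)] at h2
        convert h2 using 2 <;> push_cast <;> ring
      have c1 : (0:ℝ) < (N.choose j : ℝ) := by exact_mod_cast Nat.choose_pos hj
      have c2 : (0:ℝ) < ((N+1).choose j : ℝ) := by exact_mod_cast Nat.choose_pos (by omega)
      rw [div_eq_div_iff (ne_of_gt c2) (ne_of_gt c1)]
      have hN1 : ((N:ℝ)+1) ≠ 0 := by positivity
      apply mul_left_cancel₀ hN1
      linear_combination (esym (N+1) j x) * hcj - ((N+1).choose j : ℝ) * hk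
    have e0 := pmEq (m-1) (by omega)
    have e1 := pmEq m (by omega)
    have e2 := pmEq (m+1) hN
    constructor
    · rw [e0, e1, e2]
      exact (ih μ).1
    · intro hne heq
      rw [e0, e1, e2] at heq
      have hneμ : esym N m μ ≠ 0 := by
        intro h0
        apply hne
        have hk := hkey m (by omega)
        rw [h0, mul_zero] at hk
        have hfac : ((N:ℝ)+1) - m ≠ 0 := by
          have : (m:ℝ) ≤ N := by exact_mod_cast (by omega : m ≤ N)
          linarith
        rcases mul_eq_zero.1 hk.symm with h | h
        · exact absurd h hfac
        · exact h
      have hvar := (ih μ).2 hneμ heq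
      have hv1 := (var_iff N (by omega) μ).1 hvar
      have f1 := pmEq 1 (by omega)
      have f2 := pmEq 2 (by omega)
      rw [← f1, ← f2] at hv1
      have := (var_iff (N+1) (by omega) x).2 hv1
      push_cast at this ⊢
      exact this


noncomputable def pmh (n : ℕ) (x : Fin n → ℝ) (m : ℕ) : ℝ := esym n m x / (n.choose m : ℝ)

set_option maxHeartbeats 1000000 in
lemma chain_lt (q : ℕ → ℝ) (k l r s : ℕ) (hlk : l < k) (hsr : s < r) (hrk : r ≤ k)
    (hsl : s ≤ l) (hne : ¬(k = r ∧ l = s))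
    (hqpos : ∀ m, m ≤ k → 0 < q m)
    (hqmono : ∀ a b, 1 ≤ a → a < b → b ≤ k → q b < q a) :
    (∏ m ∈ Finset.Ioc l k, q m) ^ (r - s) < (∏ m ∈ Finset.Ioc s r, q m) ^ (k - l) := by
  have hqle : ∀ a b, 1 ≤ a → a ≤ b → b ≤ k → q b ≤ q a := by
    intro a b ha hab hbk
    rcases eq_or_lt_of_le hab with rfl | h
    · exact le_refl _
    · exact (hqmono a b ha h hbk).le
  have hIocpos : ∀ a b : ℕ, b ≤ k → (0:ℝ) < ∏ m ∈ Finset.Ioc a b, q m :=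
    fun a b hbk => Finset.prod_pos fun m hm =>
      hqpos m (le_trans (Finset.mem_Ioc.1 hm).2 hbk)
  rcases Nat.lt_or_ge l r with hlr | hrl
  · -- overlapping case l < r
    set d := r - l with hd
    set u := l - s with hu
    set v := k - r with hv
    set α := q (l+1) with hα
    set β := q r with hβ
    have hαpos : 0 < α := hqpos (l+1) (by omega)
    have hβpos : 0 < β := hqpos r hrk
    have hβα : β ≤ α := hqle (l+1) r (by omega) (by omega) hrk
    set P := ∏ m ∈ Finset.Ioc l r, q m with hP
    have hPpos : 0 < P := hIocpos l r hrk
    have hsplitA : ∏ m ∈ Finset.Ioc l k, q m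
        = P * ∏ m ∈ Finset.Ioc r k, q m :=
      (Finset.prod_Ioc_consecutive _ hlr.le hrk).symm
    have hsplitB : ∏ m ∈ Finset.Ioc s r, q m
        = (∏ m ∈ Finset.Ioc s l, q m) * P :=
      (Finset.prod_Ioc_consecutive _ hsl hlr.le).symm
    have hPα : P ≤ α ^ d := by
      have h := Finset.prod_le_prod (s := Finset.Ioc l r)
        (f := fun m => q m) (g := fun _ => α)
        (fun m hm => (hqpos m (le_trans (Finset.mem_Ioc.1 hm).2 hrk)).le)
        (fun m hm => hqle (l+1) m (by omega)
          (by have := (Finset.mem_Ioc.1 hm).1; omega)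
          (le_trans (Finset.mem_Ioc.1 hm).2 hrk))
      rwa [Finset.prod_const, Nat.card_Ioc] at h
    have hPβ : β ^ d ≤ P := by
      have h := Finset.prod_le_prod (s := Finset.Ioc l r)
        (f := fun _ => β) (g := fun m => q m)
        (fun m hm => hβpos.le)
        (fun m hm => hqle m r
          (by have := (Finset.mem_Ioc.1 hm).1; omega)
          (Finset.mem_Ioc.1 hm).2 hrk)
      rwa [Finset.prod_const, Nat.card_Ioc] at h
    have hAle : ∏ m ∈ Finset.Ioc r k, q m ≤ β ^ v := by
      have h := Finset.prod_le_prod (s := Finset.Ioc r k)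
        (f := fun m => q m) (g := fun _ => β)
        (fun m hm => (hqpos m (Finset.mem_Ioc.1 hm).2).le)
        (fun m hm => hqle r m (by omega)
          (by have := (Finset.mem_Ioc.1 hm).1; omega)
          (Finset.mem_Ioc.1 hm).2)
      rwa [Finset.prod_const, Nat.card_Ioc] at h
    rcases Nat.lt_or_ge s l with hsl' | hsl'
    · -- u ≥ 1
      have hu1 : 1 ≤ u := by omega
      have hBgt : α ^ u * P < ∏ m ∈ Finset.Ioc s r, q m := by
        rw [hsplitB]
        apply mul_lt_mul_of_pos_right ?_ hPpos
        have h := Finset.prod_lt_prod_of_nonempty (s := Finset.Ioc s l)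
          (f := fun _ => α) (g := fun m => q m)
          (fun m hm => hαpos)
          (fun m hm => hqmono m (l+1)
            (by have := (Finset.mem_Ioc.1 hm).1; omega)
            (by have := (Finset.mem_Ioc.1 hm).2; omega) (by omega))
          (Finset.nonempty_Ioc.2 hsl')
        rwa [Finset.prod_const, Nat.card_Ioc] at h
      have step1 : (∏ m ∈ Finset.Ioc l k, q m) ^ (r - s)
          ≤ (P * β ^ v) ^ (r - s) := by
        apply pow_le_pow_left₀ (hIocpos l k le_rfl).le
        rw [hsplitA]
        exact mul_le_mul_of_nonneg_left hAle hPpos.le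
      have step2 : (P * β ^ v) ^ (r - s) ≤ (α ^ u * P) ^ (k - l) := by
        rw [show r - s = d + u by omega, show k - l = d + v by omega]
        calc (P * β ^ v) ^ (d + u)
            = P^d * ((β^d)^v * (P^u * (β^u)^v)) := by ring
          _ ≤ P^d * (P^v * ((α^d)^u * (α^u)^v)) := by
              apply mul_le_mul_of_nonneg_left ?_ (pow_nonneg hPpos.le d)
              apply mul_le_mul (pow_le_pow_left₀ (pow_nonneg hβpos.le d) hPβ v)
              · apply mul_le_mul (pow_le_pow_left₀ hPpos.le hPα u)
                  (pow_le_pow_left₀ (pow_nonneg hβpos.le u)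
                    (pow_le_pow_left₀ hβpos.le hβα u) v)
                  (by positivity) (by positivity)
              · positivity
              · positivity
          _ = (α ^ u * P) ^ (d + v) := by ring
      have step3 : (α ^ u * P) ^ (k - l)
          < (∏ m ∈ Finset.Ioc s r, q m) ^ (k - l) :=
        pow_lt_pow_left₀ hBgt (by positivity) (by omega)
      exact lt_of_le_of_lt (le_trans step1 step2) step3
    · -- s = l, so v ≥ 1
      have hse : s = l := le_antisymm hsl hsl'
      have hkr : k ≠ r := fun h => hne ⟨h, hse.symm⟩
      have hv1 : 1 ≤ v := by omega
      have hAlt : ∏ m ∈ Finset.Ioc l k, q m < P * β ^ v := by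
        rw [hsplitA]
        apply mul_lt_mul_of_pos_left ?_ hPpos
        have h := Finset.prod_lt_prod_of_nonempty (s := Finset.Ioc r k)
          (f := fun m => q m) (g := fun _ => β)
          (fun m hm => hqpos m (Finset.mem_Ioc.1 hm).2)
          (fun m hm => hqmono r m (by omega)
            (Finset.mem_Ioc.1 hm).1 (Finset.mem_Ioc.1 hm).2)
          (Finset.nonempty_Ioc.2 (by omega))
        rwa [Finset.prod_const, Nat.card_Ioc] at h
      have hrs_eq : r - s = d := by omega
      have step1 : (∏ m ∈ Finset.Ioc l k, q m) ^ (r - s)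
          < (P * β ^ v) ^ (r - s) :=
        pow_lt_pow_left₀ hAlt (hIocpos l k le_rfl).le (by omega)
      have step2 : (P * β ^ v) ^ (r - s) ≤ P ^ (k - l) := by
        rw [hrs_eq, show k - l = d + v by omega]
        calc (P * β ^ v) ^ d = P^d * (β^d)^v := by ring
          _ ≤ P^d * P^v := mul_le_mul_of_nonneg_left
              (pow_le_pow_left₀ (pow_nonneg hβpos.le d) hPβ v)
              (pow_nonneg hPpos.le d)
          _ = P ^ (d + v) := by ring
      have hBP : (∏ m ∈ Finset.Ioc s r, q m) = P := by
        rw [hse, hP]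
      rw [hBP]
      exact lt_of_lt_of_le step1 step2
  · -- r ≤ l
    have hA_le : ∏ m ∈ Finset.Ioc l k, q m ≤ q (l+1) ^ (k - l) := by
      have h := Finset.prod_le_prod (s := Finset.Ioc l k)
        (f := fun m => q m) (g := fun _ => q (l+1))
        (fun m hm => (hqpos m (Finset.mem_Ioc.1 hm).2).le)
        (fun m hm => hqle (l+1) m (by omega)
          (by have := (Finset.mem_Ioc.1 hm).1; omega)
          (Finset.mem_Ioc.1 hm).2)
      rwa [Finset.prod_const, Nat.card_Ioc] at h
    have hB_ge : q r ^ (r - s) ≤ ∏ m ∈ Finset.Ioc s r, q m := by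
      have h := Finset.prod_le_prod (s := Finset.Ioc s r)
        (f := fun _ => q r) (g := fun m => q m)
        (fun m hm => (hqpos r hrk).le)
        (fun m hm => hqle m r
          (by have := (Finset.mem_Ioc.1 hm).1; omega)
          (Finset.mem_Ioc.1 hm).2 hrk)
      rwa [Finset.prod_const, Nat.card_Ioc] at h
    calc (∏ m ∈ Finset.Ioc l k, q m) ^ (r - s)
        ≤ (q (l+1) ^ (k - l)) ^ (r - s) :=
          pow_le_pow_left₀ (hIocpos l k le_rfl).le hA_le _
      _ = q (l+1) ^ ((k - l) * (r - s)) := by rw [← pow_mul]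
      _ < q r ^ ((k - l) * (r - s)) :=
          pow_lt_pow_left₀ (hqmono r (l+1) (by omega) (by omega) (by omega))
            (hqpos (l+1) (by omega)).le
            (by have : 1 ≤ k - l := by omega
                have : 1 ≤ r - s := by omega
                positivity)
      _ = (q r ^ (r - s)) ^ (k - l) := by rw [← pow_mul, Nat.mul_comm]
      _ ≤ (∏ m ∈ Finset.Ioc s r, q m) ^ (k - l) :=
          pow_le_pow_left₀ (pow_nonneg (hqpos r hrk).le _) hB_ge _

noncomputable def qh (n : ℕ) (x : Fin n → ℝ) (m : ℕ) : ℝ := pmh n x m / pmh n x (m-1)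

/-- Equality case of the generalized Newton–MacLaurin inequality. -/
theorem stmt_2 (n k l r s : ℕ) (hkn : k ≤ n) (hlk : l < k) (hrn : r ≤ n) (hsr : s < r)
    (hrk : r ≤ k) (hsl : s ≤ l) (hne : (k, l) ≠ (r, s))
    (lam : Fin n → ℝ) (hlam : lam ∈ GardingCone n k) :
    ((esym n k lam / (n.choose k : ℝ)) / (esym n l lam / (n.choose l : ℝ)))
          ^ ((1 : ℝ) / ((k : ℝ) - (l : ℝ)))
        = ((esym n r lam / (n.choose r : ℝ)) / (esym n s lam / (n.choose s : ℝ)))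
          ^ ((1 : ℝ) / ((r : ℝ) - (s : ℝ)))
      ↔ ∀ i j : Fin n, lam i = lam j := by
  have hk1 : 1 ≤ k := by omega
  have hn1 : 1 ≤ n := le_trans hk1 hkn
  have hppos : ∀ m, m ≤ k → 0 < pmh n lam m := by
    intro m hmk
    rcases Nat.eq_zero_or_pos m with rfl | hm
    · rw [pmh, esym_zero]
      simp
    · exact div_pos (hlam m hm hmk)
        (by exact_mod_cast Nat.choose_pos (le_trans hmk hkn))
  constructor
  · -- hard direction
    intro heq
    by_contra hnc
    have hstrict : ∀ m, 1 ≤ m → m + 1 ≤ k →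
        pmh n lam (m-1) * pmh n lam (m+1) < pmh n lam m ^ 2 := by
      intro m hm hmk
      have hnewton := newton m hm n (by omega) lam
      exact lt_of_le_of_ne hnewton.1
        (fun h => hnc (cs_eq n lam (hnewton.2 (ne_of_gt (hlam m hm (by omega))) h)))
    have hqpos : ∀ m, m ≤ k → 0 < qh n lam m := fun m hmk =>
      div_pos (hppos m hmk) (hppos (m-1) (by omega))
    have hqstep : ∀ m, 1 ≤ m → m + 1 ≤ k → qh n lam (m+1) < qh n lam m := by
      intro m hm hmk
      show pmh n lam (m+1) / pmh n lam m < pmh n lam m / pmh n lam (m-1)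
      rw [div_lt_div_iff₀ (hppos m (by omega)) (hppos (m-1) (by omega)), mul_comm, ← sq]
      exact hstrict m hm hmk
    have hqmono : ∀ a b, 1 ≤ a → a < b → b ≤ k → qh n lam b < qh n lam a := by
      intro a b ha hab hbk
      induction b with
      | zero => omega
      | succ b ihb =>
        rcases Nat.lt_succ_iff_lt_or_eq.1 hab with h | h
        · exact lt_trans (hqstep b (by omega) hbk) (ihb h (by omega))
        · cases h
          exact hqstep a ha hbk
    have hqle : ∀ a b, 1 ≤ a → a ≤ b → b ≤ k → qh n lam b ≤ qh n lam a := by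
      intro a b ha hab hbk
      rcases eq_or_lt_of_le hab with rfl | h
      · exact le_refl _
      · exact (hqmono a b ha h hbk).le
    have htel : ∀ a b, a ≤ b → b ≤ k →
        ∏ m ∈ Finset.Ioc a b, qh n lam m = pmh n lam b / pmh n lam a := by
      intro a b hab
      induction b, hab using Nat.le_induction with
      | base =>
        intro hbk
        rw [Finset.Ioc_self, Finset.prod_empty, div_self (ne_of_gt (hppos a hbk))]
      | succ b hab ih =>
        intro hbk
        rw [Finset.prod_Ioc_succ_top (by omega), ih (by omega)]
        show pmh n lam b / pmh n lam a * (pmh n lam (b+1) / pmh n lam b) = _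
        have h1 : pmh n lam b ≠ 0 := ne_of_gt (hppos b (by omega))
        have h2 : pmh n lam a ≠ 0 := ne_of_gt (hppos a (by omega))
        field_simp
    have hApos : 0 < pmh n lam k / pmh n lam l :=
      div_pos (hppos k le_rfl) (hppos l (by omega))
    have hBpos : 0 < pmh n lam r / pmh n lam s :=
      div_pos (hppos r hrk) (hppos s (by omega))
    have hklR : (0:ℝ) < (k:ℝ) - l := by
      have : (l:ℝ) < k := by exact_mod_cast hlk
      linarith
    have hrsR : (0:ℝ) < (r:ℝ) - s := by
      have : (s:ℝ) < r := by exact_mod_cast hsr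
      linarith
    have heqp : (pmh n lam k / pmh n lam l) ^ ((1:ℝ)/((k:ℝ) - l))
        = (pmh n lam r / pmh n lam s) ^ ((1:ℝ)/((r:ℝ) - s)) := heq
    have heq' : (pmh n lam k / pmh n lam l) ^ (r - s)
        = (pmh n lam r / pmh n lam s) ^ (k - l) := by
      have h0 : (pmh n lam k / pmh n lam l) ^ ((r:ℝ) - s)
          = (pmh n lam r / pmh n lam s) ^ ((k:ℝ) - l) := by
        calc (pmh n lam k / pmh n lam l) ^ ((r:ℝ) - s)
            = (pmh n lam k / pmh n lam l)
              ^ (((1:ℝ)/((k:ℝ)-l)) * (((k:ℝ)-l)*((r:ℝ)-s))) := by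
              congr 1
              field_simp
          _ = ((pmh n lam k / pmh n lam l) ^ ((1:ℝ)/((k:ℝ)-l)))
              ^ (((k:ℝ)-l)*((r:ℝ)-s)) := Real.rpow_mul hApos.le _ _
          _ = ((pmh n lam r / pmh n lam s) ^ ((1:ℝ)/((r:ℝ)-s)))
              ^ (((k:ℝ)-l)*((r:ℝ)-s)) := by rw [heqp]
          _ = (pmh n lam r / pmh n lam s)
              ^ (((1:ℝ)/((r:ℝ)-s)) * (((k:ℝ)-l)*((r:ℝ)-s))) :=
              (Real.rpow_mul hBpos.le _ _).symm
          _ = (pmh n lam r / pmh n lam s) ^ ((k:ℝ) - l) := by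
              congr 1
              field_simp
      rw [show (r:ℝ) - s = ((r - s : ℕ) : ℝ) by push_cast [Nat.cast_sub hsr.le]; ring,
        show (k:ℝ) - l = ((k - l : ℕ) : ℝ) by push_cast [Nat.cast_sub hlk.le]; ring,
        Real.rpow_natCast, Real.rpow_natCast] at h0
      exact h0
    have hIocpos : ∀ a b : ℕ, b ≤ k → (0:ℝ) < ∏ m ∈ Finset.Ioc a b, qh n lam m :=
      fun a b hbk => Finset.prod_pos fun m hm =>
        hqpos m (le_trans (Finset.mem_Ioc.1 hm).2 hbk)
    have hlt : (pmh n lam k / pmh n lam l) ^ (r - s)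
        < (pmh n lam r / pmh n lam s) ^ (k - l) := by
      rw [← htel l k hlk.le le_rfl, ← htel s r hsr.le hrk]
      exact chain_lt (qh n lam) k l r s hlk hsr hrk hsl
        (fun h => hne (by rw [h.1, h.2])) hqpos hqmono
    exact absurd heq' (ne_of_lt hlt)
  · -- easy direction
    intro hconst
    set i0 : Fin n := ⟨0, by omega⟩ with hi0
    set c := lam i0 with hc
    have hesymc : ∀ m, esym n m lam = (n.choose m : ℝ) * c ^ m := by
      intro m
      have hpt : ∀ t ∈ (Finset.univ : Finset (Fin n)).powersetCard m,
          ∏ i ∈ t, lam i = c ^ m := by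
        intro t ht
        rw [Finset.mem_powersetCard_univ] at ht
        rw [Finset.prod_congr rfl (fun i _ => hconst i i0), Finset.prod_const, ht]
      calc esym n m lam = ∑ t ∈ (Finset.univ : Finset (Fin n)).powersetCard m, c ^ m :=
            Finset.sum_congr rfl hpt
        _ = (n.choose m : ℝ) * c ^ m := by
            rw [Finset.sum_const, Finset.card_powersetCard, Finset.card_univ,
              Fintype.card_fin, nsmul_eq_mul]
    have hc0 : 0 < c := by
      have h1 := hlam 1 le_rfl hk1
      rw [hesymc 1, pow_one] at h1
      have h2 : (0:ℝ) < (n.choose 1 : ℝ) := by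
        exact_mod_cast Nat.choose_pos (by omega : 1 ≤ n)
      nlinarith
    have hpm : ∀ m, m ≤ n → esym n m lam / (n.choose m : ℝ) = c ^ m := by
      intro m hmn
      have hC : (n.choose m : ℝ) ≠ 0 := by
        exact_mod_cast (Nat.choose_pos hmn).ne'
      rw [hesymc m, mul_comm, mul_div_assoc, div_self hC, mul_one]
    rw [hpm k hkn, hpm l (by omega), hpm r hrn, hpm s (by omega)]
    have key : ∀ a b : ℕ, b < a → a ≤ n →
        (c ^ a / c ^ b) ^ ((1:ℝ)/((a:ℝ) - b)) = c := by
      intro a b hba han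
      rw [div_eq_mul_inv, ← pow_sub₀ c (ne_of_gt hc0) hba.le]
      rw [show (a:ℝ) - b = ((a - b : ℕ) : ℝ) by push_cast [Nat.cast_sub hba.le]; ring]
      rw [one_div, Real.pow_rpow_inv_natCast hc0.le (by omega)]
    rw [key k l hlk hkn, key r s hsr hrn]
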